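/- Let u, v be in a finite connected graph with i.i.d. Gaussian couplings and let S ⊆ E be a set of edges whose edge-induced subgraph does not connect u and v. Then the conditional expectation of the relative ground-state spin given the couplings on S vanishes: E[σ_u σ_v | {J_e}_{e∈S}] = 0 almost surely. -/

import Mathlib

open MeasureTheory ProbabilityTheory
open scoped Classical

/-- The Edwards–Anderson Hamiltonian `H_J(σ) = Σ_{e={u,v}} J_e σ_u σ_v` on a finite graph,
whose edges `e : E` have endpoints `ends e = (u, v)`. -/
def eaH {V E : Type} [Fintype E] (ends : E → V × V) (J : E → ℝ) (σ : V → ℝ) : ℝ :=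
  ∑ e, J e * σ (ends e).1 * σ (ends e).2

/-- The set of spin configurations `σ ∈ {-1,1}^V`. -/
def Spins (V : Type) : Set (V → ℝ) := {σ | ∀ v, σ v = 1 ∨ σ v = -1}

/-- A ground state: a spin configuration maximizing the Hamiltonian `H_J`. -/
def IsGroundState {V E : Type} [Fintype E] (ends : E → V × V) (J : E → ℝ) (σ : V → ℝ) :
    Prop :=
  σ ∈ Spins V ∧ ∀ σ' ∈ Spins V, eaH ends J σ' ≤ eaH ends J σ

/-- `reach ends A x y`: `y` can be reached from `x` by a path using only edges in `A`. -/
def reach {V E : Type} (ends : E → V × V) (A : Set E) : V → V → Prop :=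
  Relation.ReflTransGen (fun x y => ∃ e ∈ A, ends e = (x, y) ∨ ends e = (y, x))

/-- The product measure of i.i.d. standard Gaussian couplings `{J_e}`. -/
noncomputable def gaussPi (E : Type) [Fintype E] : Measure (E → ℝ) :=
  Measure.pi fun _ : E => gaussianReal 0 1

/-- The sub-σ-algebra generated by the couplings `{J_e}_{e ∈ S}`. -/
def coordSigma (E : Type) [Fintype E] (S : Set E) : MeasurableSpace (E → ℝ) :=
  MeasurableSpace.comap (fun (J : E → ℝ) (e : S) => J (e : E)) inferInstance

/- Auxiliary lemmas -/

/-- Ground states always exist. -/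
lemma exists_groundState {V E : Type} [Fintype V] [Fintype E] (ends : E → V × V)
    (J : E → ℝ) : ∃ σ, IsGroundState ends J σ := by
  have hfin : (Spins V).Finite := by
    have : Spins V = {f : V → ℝ | ∀ v, f v ∈ ({1, -1} : Set ℝ)} := by
      ext σ; simp [Spins, Set.mem_insert_iff]
    rw [this]
    exact Set.Finite.pi' (fun _ => (Set.finite_singleton (1:ℝ)).insert (-1) |>.subset
      (by intro x hx; simpa [or_comm] using hx))
  have hne : (Spins V).Nonempty := ⟨fun _ => 1, fun _ => Or.inl rfl⟩
  obtain ⟨σ, hσ, hmax⟩ := Set.exists_max_image (Spins V) (eaH ends J) hfin hne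
  exact ⟨σ, hσ, fun σ' hσ' => hmax σ' hσ'⟩

/-- The flip identity for the Hamiltonian. -/
lemma eaH_flip {V E : Type} [Fintype E] (ends : E → V × V) (C : Set V)
    (J : E → ℝ) (σ : V → ℝ) :
    eaH ends (fun e => (if ((ends e).1 ∈ C ↔ (ends e).2 ∈ C) then (1:ℝ) else -1) * J e)
      (fun w => if w ∈ C then -σ w else σ w) = eaH ends J σ := by
  unfold eaH
  refine Finset.sum_congr rfl fun e _ => ?_
  by_cases h1 : (ends e).1 ∈ C <;> by_cases h2 : (ends e).2 ∈ C <;>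
    simp [h1, h2] <;> ring

lemma flip_spins {V : Type} (C : Set V) {σ : V → ℝ} (hσ : σ ∈ Spins V) :
    (fun w => if w ∈ C then -σ w else σ w) ∈ Spins V := by
  intro w
  rcases hσ w with h | h <;> by_cases hw : w ∈ C <;> simp [hw, h]

lemma flip_flip_spins {V : Type} (C : Set V) (σ : V → ℝ) :
    (fun w => if w ∈ C then -(if w ∈ C then -σ w else σ w) else
      (if w ∈ C then -σ w else σ w)) = σ := by
  funext w; by_cases hw : w ∈ C <;> simp [hw]

theorem condexp_relative_spin_zero {V E : Type} [Fintype V] [Fintype E]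
    (ends : E → V × V) (u v : V)
    (hconn : ∀ x y : V, reach ends Set.univ x y)
    (S : Set E) (hS : ¬ reach ends S u v)
    (g : (E → ℝ) → ℝ) (hg : Measurable g)
    (hgs : ∀ᵐ J ∂(gaussPi E), ∀ σ : V → ℝ, IsGroundState ends J σ → g J = σ u * σ v) :
    (gaussPi E)[g | coordSigma E S] =ᵐ[gaussPi E] 0 := by
  set μ := gaussPi E with hμdef
  have hprob : IsProbabilityMeasure μ := by
    rw [hμdef]; unfold gaussPi; infer_instance
  -- the S-component of u
  set C : Set V := {w | reach ends S u w} with hC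
  have huC : u ∈ C := Relation.ReflTransGen.refl
  have hvC : v ∉ C := hS
  -- edges in S do not cross C
  have hScross : ∀ e ∈ S, ((ends e).1 ∈ C ↔ (ends e).2 ∈ C) := by
    intro e he
    constructor
    · intro h1
      exact Relation.ReflTransGen.tail h1 ⟨e, he, Or.inl (by simp)⟩
    · intro h2
      exact Relation.ReflTransGen.tail h2 ⟨e, he, Or.inr (by simp)⟩
  -- the sign flip per edge and the flip map on couplings
  set ε : E → ℝ := fun e => if ((ends e).1 ∈ C ↔ (ends e).2 ∈ C) then (1:ℝ) else -1 with hε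
  set T : (E → ℝ) → (E → ℝ) := fun J e => ε e * J e with hT
  have hTmp : MeasurePreserving T μ μ := by
    rw [hμdef]; unfold gaussPi
    exact measurePreserving_pi _ _ (fun e => by
      constructor
      · exact (measurable_const_mul (ε e))
      · show Measure.map (fun x => ε e * x) (gaussianReal 0 1) = gaussianReal 0 1
        have : (fun x => ε e * x) = (ε e * ·) := rfl
        rw [this]
        by_cases h : ((ends e).1 ∈ C ↔ (ends e).2 ∈ C)
        · have hε1 : ε e = 1 := by rw [hε]; simp [h]
          rw [hε1]
          have : ((1:ℝ) * ·) = id := by funext x; simp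
          rw [this, Measure.map_id]
        · have hε1 : ε e = -1 := by rw [hε]; simp [h]
          rw [hε1, gaussianReal_map_const_mul]
          congr 1
          · ring
          · ext; push_cast; norm_num)
  -- T fixes the S-coordinates, hence fixes all coordSigma-measurable sets
  have hTS : ∀ (J : E → ℝ), (fun e : S => T J e) = fun e : S => J e := by
    intro J; funext e
    have : ε (e : E) = 1 := by rw [hε]; simp [hScross e e.2]
    simp [hT, this]
  have hTA : ∀ A : Set (E → ℝ), MeasurableSet[coordSigma E S] A → T ⁻¹' A = A := by
    intro A hA
    obtain ⟨B, -, hB⟩ := hA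
    rw [← hB]
    ext J
    simp only [Set.mem_preimage, hTS J]
  -- flipping spins on C turns ground states for J into ground states for T J
  have hflipgs : ∀ (J : E → ℝ) (σ : V → ℝ), IsGroundState ends J σ →
      IsGroundState ends (T J) (fun w => if w ∈ C then -σ w else σ w) := by
    intro J σ ⟨hσ, hmax⟩
    refine ⟨flip_spins C hσ, fun σ' hσ' => ?_⟩
    have h1 : eaH ends (T J) (fun w => if w ∈ C then -σ w else σ w) = eaH ends J σ :=
      eaH_flip ends C J σ
    have h2 : eaH ends (T J) σ'
        = eaH ends J (fun w => if w ∈ C then -σ' w else σ' w) := by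
      have := eaH_flip ends C J (fun w => if w ∈ C then -σ' w else σ' w)
      rwa [flip_flip_spins C σ'] at this
    rw [h1, h2]
    exact hmax _ (flip_spins C hσ')
  -- a.e., g ∘ T = -g
  have hgsT : ∀ᵐ J ∂μ, ∀ σ : V → ℝ, IsGroundState ends (T J) σ → g (T J) = σ u * σ v :=
    hTmp.quasiMeasurePreserving.tendsto_ae.eventually hgs
  have hneg : ∀ᵐ J ∂μ, g (T J) = - g J := by
    filter_upwards [hgs, hgsT] with J h1 h2
    obtain ⟨σ, hσ⟩ := exists_groundState ends J
    have hu : (if u ∈ C then -σ u else σ u) = -σ u := by simp [huC]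
    have hv : (if v ∈ C then -σ v else σ v) = σ v := by simp [hvC]
    rw [h1 σ hσ, h2 _ (hflipgs J σ hσ), hu, hv]
    ring
  -- |g| ≤ 1 a.e., hence integrable
  have hbd : ∀ᵐ J ∂μ, ‖g J‖ ≤ (1:ℝ) := by
    filter_upwards [hgs] with J h1
    obtain ⟨σ, hσ⟩ := exists_groundState ends J
    rw [h1 σ hσ]
    rcases hσ.1 u with hu | hu <;> rcases hσ.1 v with hv | hv <;> simp [hu, hv]
  have hint : Integrable g μ :=
    Integrable.mono' (integrable_const (1:ℝ)) hg.aestronglyMeasurable hbd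
  -- coordSigma ≤ ambient σ-algebra
  have hm : coordSigma E S ≤ (inferInstance : MeasurableSpace (E → ℝ)) :=
    Measurable.comap_le (measurable_pi_lambda _ (fun e => measurable_pi_apply (e : E)))
  -- set integrals of g over coordSigma-sets vanish
  have hzero : ∀ A : Set (E → ℝ), MeasurableSet[coordSigma E S] A →
      ∫ x in A, g x ∂μ = 0 := by
    intro A hA
    have hA0 : MeasurableSet A := hm A hA
    have hmapA : Measure.map T (μ.restrict A) = μ.restrict A := by
      have := Measure.restrict_map hTmp.measurable hA0 (μ := μ)
      rw [hTmp.map_eq, hTA A hA] at this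
      exact this.symm
    have key : ∫ x in A, g x ∂μ = ∫ x in A, g (T x) ∂μ := by
      have hgm : AEStronglyMeasurable g (Measure.map T (μ.restrict A)) := by
        rw [hmapA]; exact hg.aestronglyMeasurable
      conv_lhs => rw [← hmapA]
      exact integral_map hTmp.measurable.aemeasurable hgm
    have hnegA : ∀ᵐ x ∂(μ.restrict A), g (T x) = - g x := ae_restrict_of_ae hneg
    have key2 : ∫ x in A, g (T x) ∂μ = - ∫ x in A, g x ∂μ := by
      rw [integral_congr_ae hnegA, integral_neg]
    have := key.trans key2
    linarith
  -- conclude via uniqueness of conditional expectation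
  have h0 : (fun _ : E → ℝ => (0:ℝ)) =ᵐ[μ] μ[g | coordSigma E S] := by
    refine ae_eq_condExp_of_forall_setIntegral_eq hm hint
      (fun s _ _ => integrableOn_zero) (fun s hs _ => ?_) ?_
    · rw [hzero s hs]; simp
    · exact StronglyMeasurable.aestronglyMeasurable stronglyMeasurable_const
  exact h0.symm
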